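/- Segre's theorem: if q is odd, then every arc of size q+1 in PG(2, q) is a conic, i.e., the zero set of a nondegenerate quadratic form on F_q^3. -/

import Mathlib

/-- A set of points of `PG(2, F)` is a planar arc if any three distinct points are
independent (no three collinear). -/
def IsArcIn (F : Type*) [Field F] (m : ℕ)
    (A : Set (Projectivization F (Fin m → F))) : Prop :=
  ∀ f : Fin m → Projectivization F (Fin m → F),
    Function.Injective f → (∀ i, f i ∈ A) → Projectivization.Independent f

namespace SegreAux

open scoped Classical

variable {F : Type*} [Field F]

instance instFinitePG {F : Type*} [Field F] [Fintype F] :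
    Finite (Projectivization F (Fin 3 → F)) := Quotient.finite _

/-- explicit 3x3 determinant of three vectors -/
def dd (x y z : Fin 3 → F) : F :=
  x 0 * (y 1 * z 2 - y 2 * z 1) - x 1 * (y 0 * z 2 - y 2 * z 0) + x 2 * (y 0 * z 1 - y 1 * z 0)

lemma det_eq_dd (x y z : Fin 3 → F) : Matrix.det ![x, y, z] = dd x y z := by
  show Matrix.det (Matrix.of ![x, y, z]) = _
  rw [Matrix.det_fin_three]
  simp [dd]
  ring

lemma dd_self23 (x y : Fin 3 → F) : dd x y y = 0 := by unfold dd; ring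

/-- Grassmann–Plücker relation -/
lemma gp (x b c d e : Fin 3 → F) :
    dd x b c * dd x d e - dd x b d * dd x c e + dd x b e * dd x c d = 0 := by
  unfold dd; ring

/-- key identity for the change-of-reference-pair lemma -/
lemma keyid (p q r q' r' e : Fin 3 → F) (τ : F) :
    (dd p q r' - τ * dd p r r') * dd p q' e - (dd p q q' - τ * dd p r q') * dd p r' e
      = dd p q' r' * (dd p q e - τ * dd p r e) := by
  unfold dd; ring

/-- Cramer's rule as a polynomial identity -/
lemma cramer3 (a b c x : Fin 3 → F) :
    dd a b c • x = dd b c x • a + dd c a x • b + dd a b x • c := by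
  funext i
  fin_cases i <;> (simp [dd]; ring)

lemma dd_add3 (x y a b : Fin 3 → F) : dd x y (a + b) = dd x y a + dd x y b := by
  unfold dd; simp [Pi.add_apply]; ring

lemma dd_smul3 (x y : Fin 3 → F) (c : F) (a : Fin 3 → F) :
    dd x y (c • a) = c * dd x y a := by
  unfold dd; simp [Pi.smul_apply, smul_eq_mul]; ring

noncomputable def d3 (p q r : Projectivization F (Fin 3 → F)) : F := dd p.rep q.rep r.rep

lemma arc_d3_ne_zero {A : Set (Projectivization F (Fin 3 → F))} (hA : IsArcIn F 3 A)
    {p q r : Projectivization F (Fin 3 → F)}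
    (hp : p ∈ A) (hq : q ∈ A) (hr : r ∈ A)
    (hpq : p ≠ q) (hpr : p ≠ r) (hqr : q ≠ r) : d3 p q r ≠ 0 := by
  have hinj : Function.Injective ![p, q, r] := by
    intro i j hij
    fin_cases i <;> fin_cases j <;> simp_all
  have hind := hA ![p, q, r] hinj (by intro i; fin_cases i <;> simpa)
  rw [Projectivization.independent_iff] at hind
  have h2 : (Projectivization.rep ∘ ![p, q, r]) =
      fun i => (Matrix.of ![p.rep, q.rep, r.rep]) i := by
    funext i; fin_cases i <;> rfl
  rw [h2] at hind
  have h3 : IsUnit (Matrix.of ![p.rep, q.rep, r.rep]) :=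
    Matrix.linearIndependent_rows_iff_isUnit.mp hind
  have h4 : IsUnit (Matrix.of ![p.rep, q.rep, r.rep]).det :=
    (Matrix.isUnit_iff_isUnit_det _).mp h3
  have h5 := h4.ne_zero
  have h6 : (Matrix.of ![p.rep, q.rep, r.rep]).det = dd p.rep q.rep r.rep := det_eq_dd _ _ _
  rw [h6] at h5
  exact h5

lemma prod_univ_erase_zero [Fintype F] [DecidableEq F] :
    ∏ x ∈ Finset.univ.erase (0 : F), x = -1 := by
  have h : ((∏ x : Fˣ, x : Fˣ) : F) = ((-1 : Fˣ) : F) := by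
    rw [FiniteField.prod_univ_units_id_eq_neg_one]
  rw [Units.val_neg, Units.val_one] at h
  rw [← h]
  push_cast
  symm
  apply Finset.prod_bij (fun (u : Fˣ) _ => (u : F))
  · intro u _
    exact Finset.mem_erase.mpr ⟨u.ne_zero, Finset.mem_univ _⟩
  · intro u _ v _ huv
    exact Units.ext huv
  · intro x hx
    exact ⟨Units.mk0 x (Finset.mem_erase.mp hx).1, Finset.mem_univ _, rfl⟩
  · intro u _
    rfl

lemma exists_tau [Fintype F] {A : Set (Projectivization F (Fin 3 → F))} (hA : IsArcIn F 3 A)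
    (hcard : A.ncard = Fintype.card F + 1)
    {p q r : Projectivization F (Fin 3 → F)} (hp : p ∈ A) (hq : q ∈ A) (hr : r ∈ A)
    (hpq : p ≠ q) (hpr : p ≠ r) (hqr : q ≠ r) :
    ∃ m : F, m ≠ 0 ∧
      (∀ e ∈ A, e ≠ p → d3 p q e - m * d3 p r e ≠ 0) ∧
      (m * ∏ e ∈ (A.toFinite.toFinset \ {p, q, r}), (d3 p q e / d3 p r e) = -1) ∧
      (∀ m' : F, (∀ e ∈ A, e ≠ p → e ≠ r → d3 p q e ≠ m' * d3 p r e) → m' = m) := by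
  classical
  set Af := A.toFinite.toFinset with hAf
  have hmemAf : ∀ x, x ∈ Af ↔ x ∈ A := fun x => Set.Finite.mem_toFinset _
  have hcardAf : Af.card = Fintype.card F + 1 := by
    rw [← Set.ncard_eq_toFinset_card A A.toFinite, hcard]
  set T := Af \ {p, r} with hT
  have hmemT : ∀ x, x ∈ T ↔ x ∈ A ∧ x ≠ p ∧ x ≠ r := by
    intro x
    simp only [hT, Finset.mem_sdiff, Finset.mem_insert, Finset.mem_singleton, not_or, hmemAf]
    try tauto
  have hsubpr : ({p, r} : Finset _) ⊆ Af := by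
    intro x hx
    rcases Finset.mem_insert.mp hx with h | h
    · exact (hmemAf x).mpr (h ▸ hp)
    · exact (hmemAf x).mpr ((Finset.mem_singleton.mp h) ▸ hr)
  have hcardT : T.card = Fintype.card F - 1 := by
    rw [hT, Finset.card_sdiff_of_subset hsubpr, hcardAf, Finset.card_insert_of_notMem (by simpa using hpr),
      Finset.card_singleton]
    omega
  set M : Projectivization F (Fin 3 → F) → F := fun e => d3 p q e / d3 p r e with hM
  have hnzr : ∀ e ∈ T, d3 p r e ≠ 0 := by
    intro e he
    obtain ⟨heA, hep, her⟩ := (hmemT e).mp he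
    exact arc_d3_ne_zero hA hp hr heA hpr (Ne.symm hep) (Ne.symm her)
  have hinj : Set.InjOn M T := by
    intro e he' e' he'' hMe
    have he : e ∈ T := Finset.mem_coe.mp he'
    have he2 : e' ∈ T := Finset.mem_coe.mp he''
    by_contra hne
    obtain ⟨heA, hep, her⟩ := (hmemT e).mp he
    obtain ⟨heA', hep', her'⟩ := (hmemT e').mp he2
    have h1 : d3 p r e ≠ 0 := hnzr e he
    have h2 : d3 p r e' ≠ 0 := hnzr e' he2
    have h3 : d3 p q e * d3 p r e' = d3 p q e' * d3 p r e := (div_eq_div_iff h1 h2).mp hMe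
    have h4 := gp p.rep q.rep r.rep e.rep e'.rep
    have h5 : d3 p q r * d3 p e e' = 0 := by
      unfold d3 at h3 ⊢
      linear_combination h4 + h3
    have h6 : d3 p q r ≠ 0 := arc_d3_ne_zero hA hp hq hr hpq hpr hqr
    have h7 : d3 p e e' ≠ 0 :=
      arc_d3_ne_zero hA hp heA heA' (Ne.symm hep) (Ne.symm hep') hne
    exact absurd h5 (by simp [h6, h7])
  set I := T.image M with hI
  have hcardI : I.card = Fintype.card F - 1 := by
    rw [hI, Finset.card_image_of_injOn hinj, hcardT]
  have hcardmis : ((Finset.univ : Finset F) \ I).card = 1 := by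
    rw [Finset.card_sdiff_of_subset (Finset.subset_univ _), hcardI, Finset.card_univ]
    have : 1 ≤ Fintype.card F := Fintype.card_pos
    omega
  obtain ⟨m, hmis⟩ := Finset.card_eq_one.mp hcardmis
  have hmI : m ∉ I := by
    have : m ∈ (Finset.univ : Finset F) \ I := by rw [hmis]; exact Finset.mem_singleton_self m
    exact (Finset.mem_sdiff.mp this).2
  have hMne : ∀ e ∈ T, M e ≠ m := by
    intro e he hMe
    exact hmI (Finset.mem_image.mpr ⟨e, he, hMe⟩)
  have hqT : q ∈ T := (hmemT q).mpr ⟨hq, Ne.symm hpq, hqr⟩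
  have hMq : M q = 0 := by
    have : d3 p q q = 0 := dd_self23 _ _
    simp [hM, this]
  have h0I : (0 : F) ∈ I := Finset.mem_image.mpr ⟨q, hqT, hMq⟩
  have hm0 : m ≠ 0 := fun h => hmI (h ▸ h0I)
  have hmiss : ∀ e ∈ A, e ≠ p → d3 p q e - m * d3 p r e ≠ 0 := by
    intro e heA hep h
    by_cases her : e = r
    · rw [her] at h
      have hzz : d3 p r r = 0 := dd_self23 _ _
      rw [hzz, mul_zero, sub_zero] at h
      exact arc_d3_ne_zero hA hp hq hr hpq hpr hqr h
    · have heT : e ∈ T := (hmemT e).mpr ⟨heA, hep, her⟩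
      have : M e = m := by
        show d3 p q e / d3 p r e = m
        rw [div_eq_iff (hnzr e heT)]
        have := sub_eq_zero.mp h
        linear_combination this
      exact hMne e heT this
  have huniq : ∀ m' : F, (∀ e ∈ A, e ≠ p → e ≠ r → d3 p q e ≠ m' * d3 p r e) → m' = m := by
    intro m' hm'
    have hm'I : m' ∉ I := by
      intro hmem
      obtain ⟨e, heT, hMe⟩ := Finset.mem_image.mp hmem
      obtain ⟨heA, hep, her⟩ := (hmemT e).mp heT
      apply hm' e heA hep her
      rw [← hMe]
      exact (div_mul_cancel₀ _ (hnzr e heT)).symm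
    have : m' ∈ (Finset.univ : Finset F) \ I := Finset.mem_sdiff.mpr ⟨Finset.mem_univ _, hm'I⟩
    rw [hmis] at this
    exact Finset.mem_singleton.mp this
  refine ⟨m, hm0, hmiss, ?_, huniq⟩
  have hsplit : Finset.univ.erase (0 : F) = insert m (I.erase 0) := by
    ext x
    simp only [Finset.mem_erase, Finset.mem_univ, and_true, Finset.mem_insert]
    constructor
    · intro hx
      by_cases hxm : x = m
      · exact Or.inl hxm
      · right
        refine ⟨hx, ?_⟩
        by_contra hxI
        have : x ∈ (Finset.univ : Finset F) \ I := Finset.mem_sdiff.mpr ⟨Finset.mem_univ _, hxI⟩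
        rw [hmis] at this
        exact hxm (Finset.mem_singleton.mp this)
    · rintro (rfl | ⟨hx0, _⟩)
      · exact hm0
      · exact hx0
  have hwil : ∏ x ∈ Finset.univ.erase (0 : F), x = -1 := prod_univ_erase_zero
  rw [hsplit] at hwil
  have hmnotin : m ∉ I.erase 0 := fun h => hmI (Finset.mem_of_mem_erase h)
  rw [Finset.prod_insert hmnotin] at hwil
  have hIerase : I.erase 0 = (T.erase q).image M := by
    ext x
    simp only [Finset.mem_erase, hI, Finset.mem_image]
    constructor
    · rintro ⟨hx0, e, heT, rfl⟩
      refine ⟨e, ⟨?_, heT⟩, rfl⟩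
      intro heq
      exact hx0 (heq ▸ hMq)
    · rintro ⟨e, heq, rfl⟩
      obtain ⟨heq', heT⟩ := heq
      obtain ⟨heA, hep, her⟩ := (hmemT e).mp heT
      constructor
      · have h1 : d3 p q e ≠ 0 :=
          arc_d3_ne_zero hA hp hq heA hpq (Ne.symm hep) (fun h => heq' (h.symm))
        exact div_ne_zero h1 (hnzr e heT)
      · exact ⟨e, heT, rfl⟩
  rw [hIerase, Finset.prod_image (fun x hx y hy h =>
    hinj (Finset.mem_coe.mpr (Finset.mem_of_mem_erase hx))
      (Finset.mem_coe.mpr (Finset.mem_of_mem_erase hy)) h)] at hwil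
  have hTq : T.erase q = Af \ {p, q, r} := by
    ext x
    simp only [Finset.mem_erase, hT, Finset.mem_sdiff, Finset.mem_insert, Finset.mem_singleton,
      not_or]
    tauto
  rw [hTq] at hwil
  exact hwil

/-- change of reference pair for the tangent parameter -/
lemma tau_change {A : Set (Projectivization F (Fin 3 → F))} (hA : IsArcIn F 3 A)
    {p q r q' r' : Projectivization F (Fin 3 → F)}
    (hp : p ∈ A) (hq' : q' ∈ A) (hr' : r' ∈ A)
    (hpq' : p ≠ q') (hpr' : p ≠ r') (hq'r' : q' ≠ r')
    {m m' : F}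
    (hm_missing : ∀ e ∈ A, e ≠ p → d3 p q e - m * d3 p r e ≠ 0)
    (hm'_uniq : ∀ c : F, (∀ e ∈ A, e ≠ p → e ≠ r' → d3 p q' e ≠ c * d3 p r' e) → c = m') :
    m' * (d3 p q r' - m * d3 p r r') = d3 p q q' - m * d3 p r q' := by
  have hden : d3 p q r' - m * d3 p r r' ≠ 0 := hm_missing r' hr' (Ne.symm hpr')
  set c := (d3 p q q' - m * d3 p r q') / (d3 p q r' - m * d3 p r r') with hc
  have hcmiss : ∀ e ∈ A, e ≠ p → e ≠ r' → d3 p q' e ≠ c * d3 p r' e := by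
    intro e he hep her' heq
    have h1 : (d3 p q r' - m * d3 p r r') * d3 p q' e
        = (d3 p q q' - m * d3 p r q') * d3 p r' e := by
      rw [heq, hc]
      field_simp
    have h2 := keyid p.rep q.rep r.rep q'.rep r'.rep e.rep m
    have h3 : d3 p q' r' * (d3 p q e - m * d3 p r e) = 0 := by
      unfold d3 at h1 ⊢
      linear_combination h1 - h2
    have h4 : d3 p q' r' ≠ 0 := arc_d3_ne_zero hA hp hq' hr' hpq' hpr' hq'r'
    have h5 : d3 p q e - m * d3 p r e ≠ 0 := hm_missing e he hep
    exact absurd h3 (by simp [h4, h5, mul_eq_zero, not_or])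
  have hcm : c = m' := hm'_uniq c hcmiss
  rw [← hcm, hc]
  field_simp

/-- the lemma of tangents: product of the three tangent parameters of a triangle is 1 -/
lemma tau_triangle [Fintype F] {A : Set (Projectivization F (Fin 3 → F))} (hA : IsArcIn F 3 A)
    (hcard : A.ncard = Fintype.card F + 1) (hodd : Odd (Fintype.card F))
    {a b c : Projectivization F (Fin 3 → F)}
    (ha : a ∈ A) (hb : b ∈ A) (hc : c ∈ A)
    (hab : a ≠ b) (hac : a ≠ c) (hbc : b ≠ c)
    {m1 m2 m3 : F}
    (h1 : m1 * ∏ e ∈ (A.toFinite.toFinset \ {a, b, c}), (d3 a b e / d3 a c e) = -1)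
    (h2 : m2 * ∏ e ∈ (A.toFinite.toFinset \ {b, c, a}), (d3 b c e / d3 b a e) = -1)
    (h3 : m3 * ∏ e ∈ (A.toFinite.toFinset \ {c, a, b}), (d3 c a e / d3 c b e) = -1) :
    m1 * m2 * m3 = 1 := by
  classical
  set Af := A.toFinite.toFinset with hAf
  have hmemAf : ∀ x, x ∈ Af ↔ x ∈ A := fun x => Set.Finite.mem_toFinset _
  set D := Af \ {a, b, c} with hD
  have hD2 : Af \ {b, c, a} = D := by
    rw [hD]; congr 1; ext x; simp only [Finset.mem_insert, Finset.mem_singleton]; tauto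
  have hD3 : Af \ {c, a, b} = D := by
    rw [hD]; congr 1; ext x; simp only [Finset.mem_insert, Finset.mem_singleton]; tauto
  rw [hD2] at h2
  rw [hD3] at h3
  have hmemD : ∀ x, x ∈ D ↔ x ∈ A ∧ x ≠ a ∧ x ≠ b ∧ x ≠ c := by
    intro x
    simp only [hD, Finset.mem_sdiff, Finset.mem_insert, Finset.mem_singleton, not_or, hmemAf]
    try tauto
  have hpoint : ∀ e ∈ D,
      (d3 a b e / d3 a c e) * ((d3 b c e / d3 b a e) * (d3 c a e / d3 c b e)) = -1 := by
    intro e he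
    obtain ⟨heA, hea, heb, hec⟩ := (hmemD e).mp he
    have hX : d3 a b e ≠ 0 := arc_d3_ne_zero hA ha hb heA hab (Ne.symm hea) (Ne.symm heb)
    have hY : d3 b c e ≠ 0 := arc_d3_ne_zero hA hb hc heA hbc (Ne.symm heb) (Ne.symm hec)
    have hV : d3 c a e ≠ 0 := arc_d3_ne_zero hA hc ha heA (Ne.symm hac) (Ne.symm hec) (Ne.symm hea)
    have e1 : d3 a c e = - d3 c a e := by unfold d3 dd; ring
    have e2 : d3 b a e = - d3 a b e := by unfold d3 dd; ring
    have e3 : d3 c b e = - d3 b c e := by unfold d3 dd; ring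
    rw [e1, e2, e3]
    field_simp
  have hprod : (∏ e ∈ D, (d3 a b e / d3 a c e)) * ((∏ e ∈ D, (d3 b c e / d3 b a e)) *
      (∏ e ∈ D, (d3 c a e / d3 c b e))) = -1 := by
    rw [← Finset.prod_mul_distrib, ← Finset.prod_mul_distrib]
    rw [Finset.prod_congr rfl hpoint]
    rw [Finset.prod_const]
    have hcardAf : Af.card = Fintype.card F + 1 := by
      rw [hAf, ← Set.ncard_eq_toFinset_card A A.toFinite, hcard]
    have hsub : ({a, b, c} : Finset _) ⊆ Af := by
      intro x hx
      rcases Finset.mem_insert.mp hx with h | h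
      · exact (hmemAf x).mpr (h ▸ ha)
      rcases Finset.mem_insert.mp h with h' | h'
      · exact (hmemAf x).mpr (h' ▸ hb)
      · exact (hmemAf x).mpr ((Finset.mem_singleton.mp h') ▸ hc)
    have hcard3 : ({a, b, c} : Finset (Projectivization F (Fin 3 → F))).card = 3 := by
      rw [Finset.card_insert_of_notMem (by simp [hab, hac]),
        Finset.card_insert_of_notMem (by simpa using hbc), Finset.card_singleton]
    have hcardD : D.card = Fintype.card F - 2 := by
      rw [hD, Finset.card_sdiff_of_subset hsub, hcardAf, hcard3]
      omega
    rw [hcardD]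
    have hodd' : Odd (Fintype.card F - 2) := by
      rcases hodd with ⟨k, hk⟩
      have h2 : 2 ≤ Fintype.card F := Fintype.one_lt_card
      exact ⟨k - 1, by omega⟩
    exact hodd'.neg_one_pow
  have hmul : (m1 * (∏ e ∈ D, (d3 a b e / d3 a c e))) * ((m2 * (∏ e ∈ D, (d3 b c e / d3 b a e)))
      * (m3 * (∏ e ∈ D, (d3 c a e / d3 c b e)))) = (-1 : F) * ((-1) * (-1)) := by
    rw [h1, h2, h3]
  have key : (m1 * m2 * m3) * ((∏ e ∈ D, (d3 a b e / d3 a c e)) *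
      ((∏ e ∈ D, (d3 b c e / d3 b a e)) * (∏ e ∈ D, (d3 c a e / d3 c b e)))) = -1 := by
    linear_combination hmul
  rw [hprod] at key
  linear_combination - key

/-- the Segre bilinear form built from three base points and two tangent parameters -/
noncomputable def segreB (x y z : Fin 3 → F) (s t : F) :
    LinearMap.BilinMap F (Fin 3 → F) F :=
  LinearMap.mk₂ F
    (fun v w => s * t * (dd z x v * dd x y w) + s * (dd y z v * dd z x w) + dd y z v * dd x y w)
    (fun v v' w => by simp only [dd_add3]; ring)
    (fun a v w => by simp only [dd_smul3, smul_eq_mul]; ring)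
    (fun v w w' => by simp only [dd_add3]; ring)
    (fun a v w => by simp only [dd_smul3, smul_eq_mul]; ring)

lemma segreB_apply (x y z : Fin 3 → F) (s t : F) (v w : Fin 3 → F) :
    segreB x y z s t v w =
      s * t * (dd z x v * dd x y w) + s * (dd y z v * dd z x w) + dd y z v * dd x y w := rfl

lemma coords_ne_zero (ra rb rc : Fin 3 → F) (hΔ : dd ra rb rc ≠ 0) (v : Fin 3 → F)
    (hv : v ≠ 0) : ¬(dd rb rc v = 0 ∧ dd rc ra v = 0 ∧ dd ra rb v = 0) := by
  rintro ⟨h1, h2, h3⟩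
  apply hv
  funext i
  have hcr := congrFun (cramer3 ra rb rc v) i
  simp only [Pi.smul_apply, smul_eq_mul, Pi.add_apply] at hcr
  rw [h1, h2, h3] at hcr
  simp only [zero_mul, add_zero, zero_add] at hcr
  have h0 : dd ra rb rc * v i = 0 := by linear_combination hcr
  exact (mul_eq_zero.mp h0).resolve_left hΔ

lemma mk_eq_of_cross (ra rb rc : Fin 3 → F) (hΔ : dd ra rb rc ≠ 0)
    (x x' : Fin 3 → F) (hx : x ≠ 0) (hx' : x' ≠ 0)
    (e1 : dd rb rc x * dd rc ra x' = dd rb rc x' * dd rc ra x)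
    (e2 : dd rb rc x * dd ra rb x' = dd rb rc x' * dd ra rb x)
    (e3 : dd rc ra x * dd ra rb x' = dd rc ra x' * dd ra rb x) :
    Projectivization.mk F x hx = Projectivization.mk F x' hx' := by
  have hcr : ∀ (v : Fin 3 → F) (i : Fin 3), dd ra rb rc * v i
      = dd rb rc v * ra i + dd rc ra v * rb i + dd ra rb v * rc i := by
    intro v i
    have := congrFun (cramer3 ra rb rc v) i
    simpa [Pi.smul_apply, smul_eq_mul, Pi.add_apply] using this
  have hscale : ∀ (C C' : F), C ≠ 0 → C' ≠ 0 →
      (∀ i, C' * (dd ra rb rc * x i) = C * (dd ra rb rc * x' i)) →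
      Projectivization.mk F x hx = Projectivization.mk F x' hx' := by
    intro C C' hC hC' hcomp
    refine (Projectivization.mk_eq_mk_iff' F x x' hx hx').mpr
      ⟨(C * dd ra rb rc) / (C' * dd ra rb rc), funext fun i => ?_⟩
    have h := hcomp i
    have hne : C' * dd ra rb rc ≠ 0 := mul_ne_zero hC' hΔ
    rw [Pi.smul_apply, smul_eq_mul, div_mul_eq_mul_div, div_eq_iff hne]
    linear_combination - h
  by_cases hU : dd rb rc x ≠ 0
  · have hU' : dd rb rc x' ≠ 0 := by
      intro h0
      have hV' : dd rc ra x' = 0 := by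
        have h := e1
        rw [h0, zero_mul] at h
        exact (mul_eq_zero.mp h).resolve_left hU
      have hW' : dd ra rb x' = 0 := by
        have h := e2
        rw [h0, zero_mul] at h
        exact (mul_eq_zero.mp h).resolve_left hU
      exact coords_ne_zero ra rb rc hΔ x' hx' ⟨h0, hV', hW'⟩
    apply hscale (dd rb rc x) (dd rb rc x') hU hU'
    intro i
    have h1 := hcr x i
    have h2 := hcr x' i
    linear_combination (dd rb rc x') * h1 - (dd rb rc x) * h2 - (rb i) * e1 - (rc i) * e2
  · push_neg at hU
    by_cases hV : dd rc ra x ≠ 0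
    · have hV' : dd rc ra x' ≠ 0 := by
        intro h0
        have hU' : dd rb rc x' = 0 := by
          have h := e1
          rw [h0, mul_zero] at h
          exact (mul_eq_zero.mp h.symm).resolve_right hV
        have hW' : dd ra rb x' = 0 := by
          have h := e3
          rw [h0, zero_mul] at h
          exact (mul_eq_zero.mp h).resolve_left hV
        exact coords_ne_zero ra rb rc hΔ x' hx' ⟨hU', h0, hW'⟩
      apply hscale (dd rc ra x) (dd rc ra x') hV hV'
      intro i
      have h1 := hcr x i
      have h2 := hcr x' i
      linear_combination (dd rc ra x') * h1 - (dd rc ra x) * h2 + (ra i) * e1 - (rc i) * e3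
    · push_neg at hV
      have hW : dd ra rb x ≠ 0 := by
        intro h0
        exact coords_ne_zero ra rb rc hΔ x hx ⟨hU, hV, h0⟩
      have hW' : dd ra rb x' ≠ 0 := by
        intro h0
        have hU' : dd rb rc x' = 0 := by
          have h := e2
          rw [h0, mul_zero] at h
          exact (mul_eq_zero.mp h.symm).resolve_right hW
        have hV' : dd rc ra x' = 0 := by
          have h := e3
          rw [h0, mul_zero] at h
          exact (mul_eq_zero.mp h.symm).resolve_right hW
        exact coords_ne_zero ra rb rc hΔ x' hx' ⟨hU', hV', h0⟩
      apply hscale (dd ra rb x) (dd ra rb x') hW hW'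
      intro i
      have h1 := hcr x i
      have h2 := hcr x' i
      linear_combination (dd ra rb x') * h1 - (dd ra rb x) * h2 + (ra i) * e2 + (rb i) * e3

end SegreAux

open SegreAux in
/-- Segre's theorem: for `q` odd, every arc of size `q+1` in `PG(2, q)`
is a conic, i.e. the zero set of a nondegenerate quadratic form on `F_q³`. -/
theorem segre_arc_is_conic {F : Type*} [Field F] [Fintype F]
    (hq : Odd (Fintype.card F))
    (A : Set (Projectivization F (Fin 3 → F))) (hA : IsArcIn F 3 A)
    (hcard : A.ncard = Fintype.card F + 1) :
    ∃ Q : QuadraticForm F (Fin 3 → F),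
      (∀ y : Fin 3 → F, y ≠ 0 → Q y = 0 → ∃ x, QuadraticMap.polar (⇑Q) x y ≠ 0) ∧
      A = {p | Q p.rep = 0} := by
  classical
  -- basic facts about the cardinality
  have hq2 : 2 ≤ Fintype.card F := Fintype.one_lt_card
  have h2F : (2 : F) ≠ 0 := by
    intro h2
    have hchar : ringChar F ∣ 2 := ringChar.dvd (by exact_mod_cast h2)
    obtain ⟨n, hp, hcard2⟩ := FiniteField.card F (ringChar F)
    have h2' : ringChar F = 2 := (Nat.prime_dvd_prime_iff_eq hp Nat.prime_two).mp hchar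
    rw [h2'] at hcard2
    have : Even (2 ^ (n : ℕ)) := by
      have hn : (n : ℕ) ≠ 0 := n.ne_zero
      exact (Nat.even_pow' hn).mpr even_two
    rw [← hcard2] at this
    have heven := Nat.even_iff.mp this
    have hodd' := Nat.odd_iff.mp hq
    omega
  -- extract three distinct points of A
  have hAfin : A.Finite := A.toFinite
  have hAne : A.Nonempty := by
    rw [← Set.ncard_pos hAfin, hcard]; omega
  obtain ⟨a, ha⟩ := hAne
  have hne1 : (A \ {a}).Nonempty := by
    rw [Set.nonempty_iff_ne_empty]
    intro h
    have hsub : A ⊆ {a} := by rwa [Set.diff_eq_empty] at h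
    have := Set.ncard_le_ncard hsub (Set.finite_singleton a)
    rw [hcard, Set.ncard_singleton] at this
    omega
  obtain ⟨b, hb'⟩ := hne1
  obtain ⟨hb, hba⟩ := hb'
  have hab : a ≠ b := fun h => hba (by simp [h.symm])
  have hne2 : (A \ {a, b}).Nonempty := by
    rw [Set.nonempty_iff_ne_empty]
    intro h
    have hsub : A ⊆ {a, b} := by rwa [Set.diff_eq_empty] at h
    have := Set.ncard_le_ncard hsub (Set.toFinite _)
    have h2 := Set.ncard_insert_le a {b}
    rw [hcard] at this
    simp [Set.ncard_singleton] at h2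
    omega
  obtain ⟨c, hc'⟩ := hne2
  obtain ⟨hc, hcab⟩ := hc'
  have hac : a ≠ c := fun h => hcab (by simp [h.symm])
  have hbc : b ≠ c := fun h => hcab (by simp [h.symm])
  -- tangent parameters at a, b, c via the triangle (a,b,c)
  obtain ⟨s, hs0, hsmiss, hsprod, hsuniq⟩ := exists_tau hA hcard ha hb hc hab hac hbc
  obtain ⟨t, ht0, htmiss, htprod, htuniq⟩ :=
    exists_tau hA hcard hb hc ha hbc (Ne.symm hab) (Ne.symm hac)
  obtain ⟨u, hu0, humiss, huprod, huuniq⟩ :=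
    exists_tau hA hcard hc ha hb (Ne.symm hac) (Ne.symm hbc) hab
  have hE1 : s * t * u = 1 := tau_triangle hA hcard hq ha hb hc hab hac hbc hsprod htprod huprod
  set ra := a.rep with hra
  set rb := b.rep with hrb
  set rc := c.rep with hrc
  set Δ := dd ra rb rc with hΔdef
  have hΔ : Δ ≠ 0 := arc_d3_ne_zero hA ha hb hc hab hac hbc
  set B := segreB ra rb rc s t with hB
  refine ⟨B.toQuadraticMap, ?_, ?_⟩
  · -- nondegeneracy
    intro y hy _
    by_contra hpol
    push_neg at hpol
    have hpolar : ∀ x, B x y + B y x = 0 := by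
      intro x
      have := hpol x
      rwa [LinearMap.BilinMap.polar_toQuadraticMap] at this
    have hpa := hpolar ra
    have hpb := hpolar rb
    have hpc := hpolar rc
    rw [hB, segreB_apply, segreB_apply] at hpa hpb hpc
    -- evaluate the special dd values
    have z1 : dd rc ra ra = 0 := dd_self23 _ _
    have z2 : dd ra rb ra = 0 := by unfold dd; ring
    have z3 : dd rb rc ra = Δ := by rw [hΔdef]; unfold dd; ring
    have z4 : dd rc ra rb = Δ := by rw [hΔdef]; unfold dd; ring
    have z5 : dd ra rb rb = 0 := dd_self23 _ _
    have z6 : dd rb rc rb = 0 := by unfold dd; ring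
    have z7 : dd rc ra rc = 0 := by unfold dd; ring
    have z8 : dd ra rb rc = Δ := by rw [hΔdef]
    have z9 : dd rb rc rc = 0 := dd_self23 _ _
    rw [z1, z2, z3] at hpa
    rw [z4, z5, z6] at hpb
    rw [z7, z8, z9] at hpc
    -- hpa : s * Δ * V y + Δ * W y = 0 etc., where U = dd rb rc y, V = dd rc ra y, W = dd ra rb y
    set Uy := dd rb rc y with hUy
    set Vy := dd rc ra y with hVy
    set Wy := dd ra rb y with hWy
    have ea : Δ * (s * Vy + Wy) = 0 := by linear_combination hpa
    have eb : Δ * (s * t * Wy + s * Uy) = 0 := by linear_combination hpb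
    have ec : Δ * (s * t * Vy + Uy) = 0 := by linear_combination hpc
    have ea' : s * Vy + Wy = 0 := by
      rcases mul_eq_zero.mp ea with h | h
      · exact absurd h hΔ
      · exact h
    have eb' : s * t * Wy + s * Uy = 0 := by
      rcases mul_eq_zero.mp eb with h | h
      · exact absurd h hΔ
      · exact h
    have ec' : s * t * Vy + Uy = 0 := by
      rcases mul_eq_zero.mp ec with h | h
      · exact absurd h hΔ
      · exact h
    have hVy0 : Vy = 0 := by
      have h2stV : s * (2 * (s * t) * Vy) = 0 := by
        linear_combination (s * t) * ea' - eb' + s * ec'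
      have h' : 2 * (s * t) * Vy = 0 := (mul_eq_zero.mp h2stV).resolve_left hs0
      rcases mul_eq_zero.mp h' with h | h
      · exact absurd h (mul_ne_zero h2F (mul_ne_zero hs0 ht0))
      · exact h
    have hWy0 : Wy = 0 := by linear_combination ea' - s * hVy0
    have hUy0 : Uy = 0 := by linear_combination ec' - s * t * hVy0
    -- now Δ • y = 0 by Cramer
    have hcr := cramer3 ra rb rc y
    rw [← hUy, ← hVy, ← hWy, hUy0, hVy0, hWy0] at hcr
    simp only [zero_smul, add_zero, zero_add] at hcr
    rw [← hΔdef] at hcr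
    have : y = 0 := by
      have h := hcr
      have : Δ • y = 0 := h
      rcases smul_eq_zero.mp this with h' | h'
      · exact absurd h' hΔ
      · exact h'
    exact hy this
  · -- the set equality
    -- first: every point of A is on the conic
    have hQval : ∀ v : Fin 3 → F, B.toQuadraticMap v =
        s * t * (dd rc ra v * dd ra rb v) + s * (dd rb rc v * dd rc ra v)
          + dd rb rc v * dd ra rb v := fun v => rfl
    have hconic : ∀ d ∈ A, d ≠ a → d ≠ b → d ≠ c →
        s * t * (d3 c a d * d3 a b d) + s * (d3 b c d * d3 c a d) + d3 b c d * d3 a b d = 0 := by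
      intro d hd hda hdb hdc
      have had : a ≠ d := Ne.symm hda
      have hbd : b ≠ d := Ne.symm hdb
      have hcd : c ≠ d := Ne.symm hdc
      set A1 := d3 b c d with hA1
      set A2 := d3 c a d with hA2
      set A3 := d3 a b d with hA3
      have hA1ne : A1 ≠ 0 := arc_d3_ne_zero hA hb hc hd hbc hbd hcd
      have hA2ne : A2 ≠ 0 := arc_d3_ne_zero hA hc ha hd (Ne.symm hac) hcd had
      have hA3ne : A3 ≠ 0 := arc_d3_ne_zero hA ha hb hd hab had hbd
      -- tangent parameters for the other triangles
      obtain ⟨σa, hσa0, hσamiss, hσaprod, hσauniq⟩ := exists_tau hA hcard ha hb hd hab had hbd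
      obtain ⟨σb, hσb0, hσbmiss, hσbprod, hσbuniq⟩ :=
        exists_tau hA hcard hb hd ha hbd (Ne.symm hab) (Ne.symm had)
      obtain ⟨σd, hσd0, hσdmiss, hσdprod, hσduniq⟩ :=
        exists_tau hA hcard hd ha hb (Ne.symm had) (Ne.symm hbd) hab
      obtain ⟨ρb, hρb0, hρbmiss, hρbprod, hρbuniq⟩ := exists_tau hA hcard hb hc hd hbc hbd hcd
      obtain ⟨ρc, hρc0, hρcmiss, hρcprod, hρcuniq⟩ :=
        exists_tau hA hcard hc hd hb hcd (Ne.symm hbc) (Ne.symm hbd)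
      obtain ⟨ρd, hρd0, hρdmiss, hρdprod, hρduniq⟩ :=
        exists_tau hA hcard hd hb hc (Ne.symm hbd) (Ne.symm hcd) hbc
      have hE2 : σa * σb * σd = 1 :=
        tau_triangle hA hcard hq ha hb hd hab had hbd hσaprod hσbprod hσdprod
      have hE3 : ρb * ρc * ρd = 1 :=
        tau_triangle hA hcard hq hb hc hd hbc hbd hcd hρbprod hρcprod hρdprod
      -- change-of-reference equations
      have C1 := tau_change hA ha hb hd hab had hbd hsmiss hσauniq
      have C2 := tau_change hA hb hd ha hbd (Ne.symm hab) (Ne.symm had) htmiss hσbuniq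
      have C3 := tau_change hA hb hc hd hbc hbd hcd htmiss hρbuniq
      have C4 := tau_change hA hc hd hb hcd (Ne.symm hbc) (Ne.symm hbd) humiss hρcuniq
      have C5 := tau_change hA hd hb hc (Ne.symm hbd) (Ne.symm hcd) hbc hσdmiss hρduniq
      -- rewrite the determinant values
      have r1 : d3 a c d = -A2 := by rw [hA2]; unfold d3 dd; ring
      have r2 : d3 a b b = 0 := by unfold d3 dd; ring
      have r3 : d3 a c b = -Δ := by rw [hΔdef, hra, hrb, hrc]; unfold d3 dd; ring
      have r4 : d3 b c a = Δ := by rw [hΔdef, hra, hrb, hrc]; unfold d3 dd; ring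
      have r5 : d3 b a a = 0 := by unfold d3 dd; ring
      have r6 : d3 b a d = -A3 := by rw [hA3]; unfold d3 dd; ring
      have r7 : d3 b c c = 0 := by unfold d3 dd; ring
      have r8 : d3 b a c = -Δ := by rw [hΔdef, hra, hrb, hrc]; unfold d3 dd; ring
      have r9 : d3 c a b = Δ := by rw [hΔdef, hra, hrb, hrc]; unfold d3 dd; ring
      have r10 : d3 c b b = 0 := by unfold d3 dd; ring
      have r11 : d3 c b d = -A1 := by rw [hA1]; unfold d3 dd; ring
      have r12 : d3 d a c = -A2 := by rw [hA2]; unfold d3 dd; ring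
      have r13 : d3 d b c = A1 := by rw [hA1]; unfold d3 dd; ring
      have r14 : d3 d a b = A3 := by rw [hA3]; unfold d3 dd; ring
      have r15 : d3 d b b = 0 := by unfold d3 dd; ring
      rw [r1, r2, r3] at C1   -- C1 : σa * (A3 - s * -A2) = 0 - s * -Δ
      rw [r4, r5, r6] at C2   -- C2 : σb * (Δ - t * 0) = A1 - t * -A3
      rw [r6, r7, r8] at C3   -- C3 : ρb * (A1 - t * -A3) = 0 - t * -Δ
      rw [r9, r10, r11] at C4 -- C4 : ρc * (Δ - u * 0) = A2 - u * -A1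
      rw [r12, r13, r14, r15] at C5 -- C5 : ρd * (-A2 - σd * A1) = A3 - σd * 0
      have C1' : σa * (A3 + s * A2) = s * Δ := by linear_combination C1
      have C2' : σb * Δ = A1 + t * A3 := by linear_combination C2
      have C3' : ρb * (A1 + t * A3) = t * Δ := by linear_combination C3
      have C4' : ρc * Δ = A2 + u * A1 := by linear_combination C4
      have C5' : ρd * (-A2 - σd * A1) = A3 := by linear_combination C5
      -- eliminate σa, σb, ρb, ρc
      have h1' : s * (A1 + t * A3) * σd * Δ = (A3 + s * A2) * Δ := by
        linear_combination (-(σd * σb * Δ)) * C1' + (-(s * Δ * σd)) * C2'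
          + ((A3 + s * A2) * Δ) * hE2
      have h1 : s * (A1 + t * A3) * σd = A3 + s * A2 := mul_right_cancel₀ hΔ h1'
      have h2' : t * (A2 + u * A1) * ρd * Δ = (A1 + t * A3) * Δ := by
        linear_combination (-(ρd * ρc * Δ)) * C3' + (-(t * Δ * ρd)) * C4'
          + ((A1 + t * A3) * Δ) * hE3
      have h2 : t * (A2 + u * A1) * ρd = A1 + t * A3 := mul_right_cancel₀ hΔ h2'
      have hfin : 2 * (s * t * A2 * A3 + s * A1 * A2 + A1 * A3) = 0 := by
        linear_combination (-(s * t * (A2 + u * A1))) * C5' + (s * (-A2 - σd * A1)) * h2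
          + (-A1) * h1 + (-(A1 * A3)) * hE1
      have hgoal : s * t * A2 * A3 + s * A1 * A2 + A1 * A3 = 0 := by
        rcases mul_eq_zero.mp hfin with h | h
        · exact absurd h h2F
        · exact h
      linear_combination hgoal
    -- A ⊆ conic
    have hsub : A ⊆ {p | B.toQuadraticMap p.rep = 0} := by
      intro p hp
      simp only [Set.mem_setOf_eq]
      by_cases hpa : p = a
      · subst hpa
        rw [hQval]
        have z1 : dd rc ra ra = 0 := dd_self23 _ _
        have z2 : dd ra rb ra = 0 := by unfold dd; ring
        rw [← hra, z1, z2]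
        ring
      by_cases hpb : p = b
      · subst hpb
        rw [hQval]
        have z5 : dd ra rb rb = 0 := dd_self23 _ _
        have z6 : dd rb rc rb = 0 := by unfold dd; ring
        rw [← hrb, z5, z6]
        ring
      by_cases hpc : p = c
      · subst hpc
        rw [hQval]
        have z7 : dd rc ra rc = 0 := by unfold dd; ring
        have z9 : dd rb rc rc = 0 := dd_self23 _ _
        rw [← hrc, z7, z9]
        ring
      · have := hconic p hp hpa hpb hpc
        rw [hQval]
        unfold d3 at this
        rw [← hra, ← hrb, ← hrc] at this
        linear_combination this
    -- the conic has at most q+1 points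
    set S := {p : Projectivization F (Fin 3 → F) | B.toQuadraticMap p.rep = 0} with hS
    have hScount : S.ncard ≤ Fintype.card F + 1 := by
      set x0 : F := -(s * t)⁻¹ with hx0
      have hx0ne : x0 ≠ 0 := by
        rw [hx0]
        simp [hs0, ht0]
      have hstx0 : s * t * x0 = -1 := by
        rw [hx0]
        field_simp
      set ψ : Projectivization F (Fin 3 → F) → Option F := fun p =>
        if dd rb rc p.rep = 0 then (if dd rc ra p.rep = 0 then none else some x0)
        else some (dd rc ra p.rep / dd rb rc p.rep) with hψ
      -- membership in S gives the conic equation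
      have hSeq : ∀ p ∈ S, s * t * (dd rc ra p.rep * dd ra rb p.rep)
          + s * (dd rb rc p.rep * dd rc ra p.rep) + dd rb rc p.rep * dd ra rb p.rep = 0 := by
        intro p hp
        have := hp
        rw [hS, Set.mem_setOf_eq, hQval] at this
        exact this
      -- injectivity of ψ on S
      have hinjψ : Set.InjOn ψ S := by
        intro p hp p' hp' heq
        have hP := hSeq p hp
        have hP' := hSeq p' hp'
        set α := dd rb rc p.rep with hαd
        set β := dd rc ra p.rep with hβd
        set γ := dd ra rb p.rep with hγd
        set α' := dd rb rc p'.rep with hα'd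
        set β' := dd rc ra p'.rep with hβ'd
        set γ' := dd ra rb p'.rep with hγ'd
        have hrepp : ∀ (hcross : α * β' = α' * β ∧ α * γ' = α' * γ ∧ β * γ' = β' * γ), p = p' := by
          rintro ⟨he1, he2, he3⟩
          rw [← Projectivization.mk_rep p, ← Projectivization.mk_rep p']
          exact mk_eq_of_cross ra rb rc hΔ p.rep p'.rep p.rep_nonzero p'.rep_nonzero he1 he2 he3
        have hψsome : ∀ r : Projectivization F (Fin 3 → F), dd rb rc r.rep ≠ 0 →
            ψ r = some (dd rc ra r.rep / dd rb rc r.rep) := by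
          intro r h
          simp only [hψ]
          rw [if_neg h]
        have hψnone : ∀ r : Projectivization F (Fin 3 → F), dd rb rc r.rep = 0 →
            dd rc ra r.rep = 0 → ψ r = none := by
          intro r h1 h2
          simp only [hψ]
          rw [if_pos h1, if_pos h2]
        have hψx0 : ∀ r : Projectivization F (Fin 3 → F), dd rb rc r.rep = 0 →
            dd rc ra r.rep ≠ 0 → ψ r = some x0 := by
          intro r h1 h2
          simp only [hψ]
          rw [if_pos h1, if_neg h2]
        by_cases hα : α = 0
        · by_cases hβ : β = 0
          · have h1 : ψ p = none := hψnone p hα hβ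
            have hα' : α' = 0 := by
              by_contra h
              rw [h1, hψsome p' h] at heq
              simp at heq
            have hβ' : β' = 0 := by
              by_contra h
              rw [h1, hψx0 p' hα' h] at heq
              simp at heq
            exact hrepp ⟨by rw [hα, hα']; ring, by rw [hα, hα']; ring,
              by rw [hβ, hβ']; ring⟩
          · have h1 : ψ p = some x0 := hψx0 p hα hβ
            have hγ : γ = 0 := by
              rw [hα] at hP
              have h : s * t * (β * γ) = 0 := by linear_combination hP
              have h2 := (mul_eq_zero.mp h).resolve_left (mul_ne_zero hs0 ht0)
              exact (mul_eq_zero.mp h2).resolve_left hβ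
            by_cases hα' : α' = 0
            · have hβ' : β' ≠ 0 := by
                intro h
                rw [h1, hψnone p' hα' h] at heq
                simp at heq
              have hγ' : γ' = 0 := by
                rw [hα'] at hP'
                have h : s * t * (β' * γ') = 0 := by linear_combination hP'
                have h2 := (mul_eq_zero.mp h).resolve_left (mul_ne_zero hs0 ht0)
                exact (mul_eq_zero.mp h2).resolve_left hβ'
              exact hrepp ⟨by rw [hα, hα']; ring, by rw [hα, hα']; ring,
                by rw [hγ, hγ']; ring⟩
            · exfalso
              have hβ'x0 : β' / α' = x0 := by
                rw [h1, hψsome p' hα'] at heq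
                exact (Option.some_injective F heq).symm
              have hβ'eq : β' = x0 * α' := by
                rw [div_eq_iff hα'] at hβ'x0
                linear_combination hβ'x0
              rw [hβ'eq] at hP'
              have hz : s * x0 * (α' * α') = 0 := by
                linear_combination hP' - (α' * γ') * hstx0
              have h2 := (mul_eq_zero.mp hz).resolve_left (mul_ne_zero hs0 hx0ne)
              exact hα' ((mul_eq_zero.mp h2).resolve_left hα')
        · have h1 : ψ p = some (β / α) := hψsome p hα
          by_cases hα' : α' = 0
          · by_cases hβ' : β' = 0
            · exfalso
              rw [h1, hψnone p' hα' hβ'] at heq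
              simp at heq
            · exfalso
              have hβx0 : β / α = x0 := by
                rw [h1, hψx0 p' hα' hβ'] at heq
                exact Option.some_injective F heq
              have hβeq : β = x0 * α := by
                rw [div_eq_iff hα] at hβx0
                linear_combination hβx0
              rw [hβeq] at hP
              have hz : s * x0 * (α * α) = 0 := by
                linear_combination hP - (α * γ) * hstx0
              have h2 := (mul_eq_zero.mp hz).resolve_left (mul_ne_zero hs0 hx0ne)
              exact hα ((mul_eq_zero.mp h2).resolve_left hα)
          · have hdiv : β / α = β' / α' := by
              rw [h1, hψsome p' hα'] at heq
              exact Option.some_injective F heq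
            have he1 : α * β' = α' * β := by
              have h := (div_eq_div_iff hα hα').mp hdiv
              linear_combination - h
            have hstβ : s * t * β + α ≠ 0 := by
              intro h
              have hsab : s * (α * β) = 0 := by linear_combination hP - γ * h
              have hβ0 : β = 0 :=
                (mul_eq_zero.mp ((mul_eq_zero.mp hsab).resolve_left hs0)).resolve_left hα
              rw [hβ0, mul_zero, zero_add] at h
              exact hα h
            have hstβ' : s * t * β' + α' ≠ 0 := by
              intro h
              have hsab : s * (α' * β') = 0 := by linear_combination hP' - γ' * h
              have hβ0 : β' = 0 :=
                (mul_eq_zero.mp ((mul_eq_zero.mp hsab).resolve_left hs0)).resolve_left hα'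
              rw [hβ0, mul_zero, zero_add] at h
              exact hα' h
            have he2big : (s * t * β + α) * ((s * t * β' + α') * (α * γ' - α' * γ)) = 0 := by
              linear_combination (α * (s * t * β + α)) * hP' - (α' * (s * t * β' + α')) * hP
                - (s * α * α') * he1
            have he2 : α * γ' = α' * γ := by
              have h := (mul_eq_zero.mp ((mul_eq_zero.mp he2big).resolve_left hstβ)).resolve_left
                hstβ'
              linear_combination h
            have he3big : (s * t * β + α) * ((s * t * β' + α') * (β * γ' - β' * γ)) = 0 := by
              linear_combination (β * (s * t * β + α)) * hP' - (β' * (s * t * β' + α')) * hP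
                + (s * s * t * β * β') * he1
            have he3 : β * γ' = β' * γ := by
              have h := (mul_eq_zero.mp ((mul_eq_zero.mp he3big).resolve_left hstβ)).resolve_left
                hstβ'
              linear_combination h
            exact hrepp ⟨he1, he2, he3⟩
      have hle := Set.ncard_le_ncard_of_injOn ψ (fun p _ => Set.mem_univ _) hinjψ Set.finite_univ
      rw [Set.ncard_univ, Nat.card_eq_fintype_card, Fintype.card_option] at hle
      exact hle
    have hAS : A.ncard = Fintype.card F + 1 := hcard
    have : S.ncard ≤ A.ncard := by rw [hAS]; exact hScount
    exact Set.eq_of_subset_of_ncard_le hsub this (Set.toFinite _)
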